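/- For a > 0 and n >= 1, the maximum of |p(ai)| over all complex polynomials p of degree at most n satisfying |p(x)| <= 1 for all x in [-1,1] equals sqrt(a^2+1) * (a + sqrt(a^2+1))^{n-1}, and this maximum is attained by the polynomial Q_n defined by Q_1(z) = -(az+i)/sqrt(a^2+1), Q_2(z) = (-(a+sqrt(a^2+1))z^2 - i z + sqrt(a^2+1))/sqrt(a^2+1), Q_{n+1}(z) = 2 z Q_n(z) - Q_{n-1}(z). -/

import Mathlib

open Polynomial

namespace Stmt18Aux

noncomputable section

open Complex Real Finset

def sr (a : ℝ) : ℝ := Real.sqrt (a ^ 2 + 1)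
def tr (a : ℝ) : ℝ := a + sr a
lemma sr_sq (a : ℝ) : sr a ^ 2 = a ^ 2 + 1 := Real.sq_sqrt (by positivity)
lemma one_le_sr (a : ℝ) : 1 ≤ sr a := by
  rw [show (1:ℝ) = Real.sqrt 1 by simp]
  exact Real.sqrt_le_sqrt (by nlinarith [sq_nonneg a])
lemma sr_pos (a : ℝ) : 0 < sr a := lt_of_lt_of_le one_pos (one_le_sr a)
lemma one_lt_tr {a : ℝ} (ha : 0 < a) : 1 < tr a := by
  have := one_le_sr a; unfold tr; linarith
lemma tr_pos {a : ℝ} (ha : 0 < a) : 0 < tr a := lt_trans one_pos (one_lt_tr ha)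
lemma tr_sq {a : ℝ} (ha : 0 < a) : tr a ^ 2 = 2 * a * tr a + 1 := by
  have := sr_sq a; unfold tr at *; nlinarith
lemma two_sr_tr {a : ℝ} (ha : 0 < a) : 2 * sr a * tr a = tr a ^ 2 + 1 := by
  have := sr_sq a; unfold tr at *; nlinarith
def P (a : ℝ) : ℕ → Polynomial ℂ
  | 0 => 0
  | 1 => C (-((sr a : ℂ))⁻¹) * (C (a : ℂ) * X + C I)
  | 2 => C ((sr a : ℂ))⁻¹ * (C (-(tr a : ℂ)) * X ^ 2 - C I * X + C (sr a : ℂ))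
  | (m+3) => C 2 * (X * P a (m+2)) - P a (m+1)

lemma P_degree (a : ℝ) : ∀ m : ℕ, (P a (m+1)).degree ≤ ((m+1 : ℕ) : WithBot ℕ) := by
  have key : ∀ m : ℕ, (P a (m+1)).degree ≤ ((m+1 : ℕ) : WithBot ℕ)
      ∧ (P a (m+2)).degree ≤ ((m+2 : ℕ) : WithBot ℕ) := by
    intro m
    induction m with
    | zero =>
      constructor
      · show (C (-((sr a : ℂ))⁻¹) * (C (a : ℂ) * X + C I)).degree ≤ _
        compute_degree!
      · show (C ((sr a : ℂ))⁻¹ * (C (-(tr a : ℂ)) * X ^ 2 - C I * X + C (sr a : ℂ))).degree ≤ _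
        compute_degree!
    | succ m ih =>
      refine ⟨ih.2, ?_⟩
      show (C 2 * (X * P a (m+2)) - P a (m+1)).degree ≤ _
      apply le_trans (degree_sub_le _ _)
      simp only [sup_le_iff]
      refine ⟨le_trans (degree_mul_le _ _) ?_, ?_⟩
      · calc degree (C (2:ℂ)) + (X * P a (m+2)).degree
            ≤ 0 + (degree X + (P a (m+2)).degree) :=
              add_le_add degree_C_le (degree_mul_le _ _)
          _ ≤ 0 + (1 + ((m+2 : ℕ) : WithBot ℕ)) := by
              exact add_le_add le_rfl (add_le_add (le_of_eq degree_X) ih.2)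
          _ ≤ _ := by norm_cast; omega
      · exact le_trans ih.1 (by norm_cast; omega)
  exact fun m => (key m).1

lemma cf (a : ℝ) (ha : 0 < a) : ∀ (m : ℕ) (z u : ℂ), 2*z*u = u^2+1 →
    (4*(sr a:ℂ)*(tr a:ℂ)) * u^(m+1) * ((P a (m+1)).eval z)
      = -(((tr a:ℂ)*u+I)^2 * u^(2*m) + ((tr a:ℂ)+I*u)^2) := by
  have hS : ((sr a : ℝ) : ℂ) ≠ 0 := by exact_mod_cast (sr_pos a).ne'
  have h4 : ((sr a:ℝ):ℂ) * ((sr a:ℝ):ℂ)⁻¹ = 1 := mul_inv_cancel₀ hS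
  have h2 : ((tr a:ℝ):ℂ)^2 = 2*(a:ℂ)*((tr a:ℝ):ℂ)+1 := by exact_mod_cast congrArg (Complex.ofReal) (tr_sq ha)
  have hST : 2*((sr a:ℝ):ℂ)*((tr a:ℝ):ℂ) = ((tr a:ℝ):ℂ)^2+1 := by
    exact_mod_cast congrArg (Complex.ofReal) (two_sr_tr ha)
  have h3 : (I:ℂ)^2 = -1 := Complex.I_sq
  have key : ∀ m : ℕ, (∀ (z u : ℂ), 2*z*u = u^2+1 →
      (4*(sr a:ℂ)*(tr a:ℂ)) * u^(m+1) * ((P a (m+1)).eval z)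
        = -(((tr a:ℂ)*u+I)^2 * u^(2*m) + ((tr a:ℂ)+I*u)^2)) ∧
      (∀ (z u : ℂ), 2*z*u = u^2+1 →
      (4*(sr a:ℂ)*(tr a:ℂ)) * u^(m+2) * ((P a (m+2)).eval z)
        = -(((tr a:ℂ)*u+I)^2 * u^(2*(m+1)) + ((tr a:ℂ)+I*u)^2)) := by
    intro m
    induction m with
    | zero =>
      constructor
      · intro z u h1
        show (4*(sr a:ℂ)*(tr a:ℂ)) * u^1 * ((C (-((sr a : ℂ))⁻¹) * (C (a : ℂ) * X + C I)).eval z) = _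
        simp only [eval_mul, eval_add, eval_C, eval_X, pow_one, pow_zero, mul_one]
        set S := ((sr a:ℝ):ℂ); set T := ((tr a:ℝ):ℂ); set A := ((a:ℝ):ℂ)
        linear_combination (-4*T*u*(A*z+I)) * h4 + (-2*T*A)*h1 + (1+u^2)*h3 + (1+u^2)*h2
      · intro z u h1
        show (4*(sr a:ℂ)*(tr a:ℂ)) * u^2 * ((C ((sr a : ℂ))⁻¹ * (C (-(tr a : ℂ)) * X ^ 2 - C I * X + C (sr a : ℂ))).eval z) = _
        simp only [eval_mul, eval_add, eval_sub, eval_C, eval_X, eval_pow]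
        set S := ((sr a:ℝ):ℂ); set T := ((tr a:ℝ):ℂ); set A := ((a:ℝ):ℂ)
        linear_combination (4*T*u^2*(-T*z^2-I*z+S)) * h4 + (-(T^2)*(2*z*u + u^2+1) - 2*T*I*u)*h1 + (2*u^2)*h3 + (2*u^2)*hST
    | succ m ih =>
      refine ⟨ih.2, ?_⟩
      intro z u h1
      have e2 := ih.2 z u h1
      have e1 := ih.1 z u h1
      show (4*(sr a:ℂ)*(tr a:ℂ)) * u^(m+3) * ((C 2 * (X * P a (m+2)) - P a (m+1)).eval z) = _
      simp only [eval_mul, eval_sub, eval_C, eval_X]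
      set S := ((sr a:ℝ):ℂ); set T := ((tr a:ℝ):ℂ)
      linear_combination (2*z*u)*e2 - (u^2)*e1 - ((T*u+I)^2*u^(2*m+2) + (T+I*u)^2)*h1
  exact fun m => (key m).1

lemma P_eval_eq_Q (a : ℝ) (Q : ℕ → ℂ → ℂ)
    (hQ1 : ∀ z : ℂ, Q 1 z = -((a : ℂ) * z + Complex.I) / (Real.sqrt (a ^ 2 + 1) : ℂ))
    (hQ2 : ∀ z : ℂ, Q 2 z =
      (-(((a : ℂ) + (Real.sqrt (a ^ 2 + 1) : ℂ))) * z ^ 2 - Complex.I * z +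
        (Real.sqrt (a ^ 2 + 1) : ℂ)) / (Real.sqrt (a ^ 2 + 1) : ℂ))
    (hrec : ∀ m : ℕ, 2 ≤ m → ∀ z : ℂ, Q (m + 1) z = 2 * z * Q m z - Q (m - 1) z) :
    ∀ m : ℕ, ∀ z : ℂ, (P a (m+1)).eval z = Q (m+1) z := by
  have key : ∀ m : ℕ, (∀ z : ℂ, (P a (m+1)).eval z = Q (m+1) z) ∧
      (∀ z : ℂ, (P a (m+2)).eval z = Q (m+2) z) := by
    intro m
    induction m with
    | zero =>
      constructor
      · intro z
        show (C (-((sr a : ℂ))⁻¹) * (C (a : ℂ) * X + C I)).eval z = _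
        rw [hQ1 z]
        simp only [eval_mul, eval_add, eval_C, eval_X]
        rw [show ((sr a : ℝ):ℂ) = ((Real.sqrt (a^2+1) : ℝ) : ℂ) from rfl]
        ring
      · intro z
        show (C ((sr a : ℂ))⁻¹ * (C (-(tr a : ℂ)) * X ^ 2 - C I * X + C (sr a : ℂ))).eval z = _
        rw [hQ2 z]
        simp only [eval_mul, eval_add, eval_sub, eval_C, eval_X, eval_pow]
        rw [show ((tr a : ℝ):ℂ) = (a:ℂ) + ((Real.sqrt (a^2+1) : ℝ) : ℂ) by
          unfold tr sr; push_cast; ring]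
        rw [show ((sr a : ℝ):ℂ) = ((Real.sqrt (a^2+1) : ℝ) : ℂ) from rfl]
        ring
    | succ m ih =>
      refine ⟨ih.2, ?_⟩
      intro z
      show (C 2 * (X * P a (m+2)) - P a (m+1)).eval z = _
      rw [hrec (m+2) (by omega) z]
      have : m + 2 - 1 = m + 1 := by omega
      rw [this]
      simp only [eval_mul, eval_sub, eval_C, eval_X, ih.1 z, ih.2 z]
      ring
  exact fun m => (key m).1

lemma P_bound (a : ℝ) (ha : 0 < a) (m : ℕ) :
    ∀ x : ℝ, x ∈ Set.Icc (-1:ℝ) 1 → ‖(P a (m+1)).eval (x : ℂ)‖ ≤ 1 := by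
  intro x hx
  have hcos : Real.cos (Real.arccos x) = x := Real.cos_arccos hx.1 hx.2
  set co := Real.cos (Real.arccos x) with hco
  set si := Real.sin (Real.arccos x) with hsi
  have hcs : si^2 + co^2 = 1 := Real.sin_sq_add_cos_sq _
  have hcsC : ((si:ℝ):ℂ)^2 + ((co:ℝ):ℂ)^2 = 1 := by exact_mod_cast congrArg Complex.ofReal hcs
  set u : ℂ := (co:ℂ) + (si:ℂ)*I with hu
  have hzu : 2*((x:ℝ):ℂ)*u = u^2+1 := by
    rw [← hcos]
    linear_combination (-((si:ℂ)^2)) * Complex.I_sq + hcsC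
  have hcf := cf a ha m (x:ℂ) u hzu
  have habs_u : ‖u‖ = 1 := by
    have h2 : ‖u‖ ^ 2 = 1 := by
      rw [Complex.sq_norm, hu, Complex.normSq_add_mul_I]
      nlinarith [hcs]
    nlinarith [norm_nonneg u]
  have hA : ‖((tr a:ℂ)*u+I)‖^2 = tr a^2+1+2*tr a*si := by
    rw [Complex.sq_norm]
    have : ((tr a:ℂ)*u+I) = ((tr a * co : ℝ):ℂ) + ((tr a * si + 1 : ℝ):ℂ)*I := by
      rw [hu]; push_cast; ring
    rw [this, Complex.normSq_add_mul_I]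
    nlinarith [hcs]
  have hB : ‖((tr a:ℂ)+I*u)‖^2 = tr a^2+1-2*tr a*si := by
    rw [Complex.sq_norm]
    have : ((tr a:ℂ)+I*u) = ((tr a - si : ℝ):ℂ) + ((co : ℝ):ℂ)*I := by
      rw [hu]; push_cast; ring_nf; linear_combination ((si:ℂ))*Complex.I_sq
    rw [this, Complex.normSq_add_mul_I]
    nlinarith [hcs]
  have hst : 0 < sr a * tr a := mul_pos (sr_pos a) (tr_pos ha)
  have key : 4*(sr a)*(tr a) * ‖(P a (m+1)).eval (x:ℂ)‖ ≤ 4*(sr a)*(tr a) := by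
    have e1 : 4*(sr a)*(tr a) * ‖(P a (m+1)).eval (x:ℂ)‖
        = ‖(4*(sr a:ℂ)*(tr a:ℂ)) * u^(m+1) * ((P a (m+1)).eval (x:ℂ))‖ := by
      simp only [norm_mul, norm_pow, habs_u, one_pow, Complex.norm_real, Real.norm_eq_abs, Complex.norm_ofNat]
      rw [abs_of_pos (sr_pos a), abs_of_pos (tr_pos ha)]
      ring
    rw [e1, hcf]
    calc ‖-(((tr a:ℂ)*u+I)^2 * u^(2*m) + ((tr a:ℂ)+I*u)^2)‖
        ≤ ‖((tr a:ℂ)*u+I)^2 * u^(2*m)‖ + ‖((tr a:ℂ)+I*u)^2‖ := by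
          rw [norm_neg]; exact norm_add_le _ _
      _ = ‖(tr a:ℂ)*u+I‖^2 + ‖(tr a:ℂ)+I*u‖^2 := by
          rw [norm_mul, norm_pow, norm_pow, norm_pow, habs_u, one_pow, mul_one]
      _ = (tr a^2+1+2*tr a*si) + (tr a^2+1-2*tr a*si) := by rw [hA, hB]
      _ = 4*(sr a)*(tr a) := by have := two_sr_tr ha; linarith
  nlinarith [key, hst]

lemma P_eval_ia (a : ℝ) (ha : 0 < a) (m : ℕ) :
    ‖(P a (m+1)).eval ((a:ℂ)*I)‖ = sr a * tr a ^ m := by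
  set u : ℂ := (tr a : ℂ) * I with hu
  have h2C : ((tr a:ℝ):ℂ)^2 = 2*(a:ℂ)*((tr a:ℝ):ℂ)+1 := by
    exact_mod_cast congrArg Complex.ofReal (tr_sq ha)
  have hzu : 2*((a:ℂ)*I)*u = u^2+1 := by
    rw [hu]; linear_combination (2*(a:ℂ)*(tr a:ℂ) - (tr a:ℂ)^2)*Complex.I_sq + h2C
  have hcf := cf a ha m ((a:ℂ)*I) u hzu
  have hcf' : (4*(sr a:ℂ)*(tr a:ℂ)) * u^(m+1) * ((P a (m+1)).eval ((a:ℂ)*I))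
      = (((tr a^2+1 : ℝ)):ℂ)^2 * u^(2*m) := by
    rw [hcf, hu]
    push_cast
    linear_combination (-(((tr a:ℂ)^2+1)^2*((tr a:ℂ)*I)^(2*m)) - (tr a:ℂ)^2*(I^2+1)) * Complex.I_sq
  have habsu : ‖u‖ = tr a := by
    rw [hu, norm_mul, Complex.norm_I, Complex.norm_real, Real.norm_eq_abs, abs_of_pos (tr_pos ha), mul_one]
  have h5 := congrArg (‖·‖) hcf'
  simp only [norm_mul, norm_pow, habsu, Complex.norm_real, Real.norm_eq_abs, Complex.norm_ofNat] at h5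
  rw [abs_of_pos (sr_pos a), abs_of_pos (tr_pos ha),
    abs_of_pos (by positivity : (0:ℝ) < tr a^2+1)] at h5
  -- h5 : 4 * sr a * tr a * tr a^(m+1) * abs e = (tr a^2+1)^2 * tr a^(2m)
  have hrhs : (tr a^2+1)^2 * tr a^(2*m) = (sr a * tr a^m) * (4 * sr a * tr a * tr a^(m+1)) := by
    have h := two_sr_tr ha
    have e1 : (tr a^2+1)^2 = (2*sr a*tr a)^2 := by rw [h]
    rw [e1]; ring
  have hne : (4 * sr a * tr a * tr a^(m+1)) ≠ 0 := by
    have := sr_pos a; have := tr_pos ha; positivity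
  refine mul_right_cancel₀ hne ?_
  linear_combination h5 + hrhs

def psi (a θ : ℝ) : ℝ := Real.arctan (Real.sin (2*θ) / (tr a^2 + Real.cos (2*θ)))
def Phi (a : ℝ) (n : ℕ) (θ : ℝ) : ℝ := n*θ - psi a θ
def nodeθ (a : ℝ) (n k : ℕ) : ℝ := sInf (Set.Icc 0 π ∩ {θ | Phi a n θ = k*π})

lemma c_pos {a : ℝ} (ha : 0 < a) (θ : ℝ) : 0 < tr a^2 + Real.cos θ := by
  nlinarith [Real.neg_one_le_cos θ, one_lt_tr ha]

lemma Phi_cont {a : ℝ} (ha : 0 < a) (n : ℕ) : Continuous (Phi a n) := by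
  have h1 : Continuous fun θ : ℝ => Real.sin (2*θ) := by fun_prop
  have h2 : Continuous fun θ : ℝ => tr a^2 + Real.cos (2*θ) := by fun_prop
  have h3 : Continuous (psi a) :=
    Real.continuous_arctan.comp (h1.div h2 (fun θ => (c_pos ha (2*θ)).ne'))
  unfold Phi
  fun_prop

lemma Phi_zero (a : ℝ) (n : ℕ) : Phi a n 0 = 0 := by
  simp [Phi, psi]

lemma Phi_pi (a : ℝ) (n : ℕ) : Phi a n π = n*π := by
  simp [Phi, psi, Real.sin_two_pi]

lemma nodeθ_mem {a : ℝ} (ha : 0 < a) {n k : ℕ} (hk : k ≤ n) :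
    nodeθ a n k ∈ Set.Icc 0 π ∧ Phi a n (nodeθ a n k) = k*π := by
  set S : Set ℝ := Set.Icc 0 π ∩ {θ | Phi a n θ = k*π} with hS
  have hne : S.Nonempty := by
    have hsub := intermediate_value_Icc (le_of_lt Real.pi_pos) ((Phi_cont ha n).continuousOn)
    rw [Phi_zero, Phi_pi] at hsub
    have hmem : (k*π : ℝ) ∈ Set.Icc 0 (n*π) := by
      constructor
      · positivity
      · apply mul_le_mul_of_nonneg_right _ Real.pi_pos.le
        exact_mod_cast hk
    obtain ⟨θ0, hθ0, hval⟩ := hsub hmem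
    exact ⟨θ0, hθ0, hval⟩
  have hclosed : IsClosed S :=
    isClosed_Icc.inter (isClosed_eq (Phi_cont ha n) continuous_const)
  have hbdd : BddBelow S := ⟨0, fun y hy => hy.1.1⟩
  have := hclosed.csInf_mem hne hbdd
  exact ⟨this.1, this.2⟩

lemma nodeθ_strict {a : ℝ} (ha : 0 < a) {n k l : ℕ} (hkl : k < l) (hl : l ≤ n) :
    nodeθ a n k < nodeθ a n l := by
  obtain ⟨hmeml, hvall⟩ := nodeθ_mem ha hl
  have hsub := intermediate_value_Icc hmeml.1 ((Phi_cont ha n).continuousOn)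
  rw [Phi_zero, hvall] at hsub
  have hmem : (k*π : ℝ) ∈ Set.Icc 0 (l*π) := by
    constructor
    · positivity
    · apply mul_le_mul_of_nonneg_right _ Real.pi_pos.le
      exact_mod_cast hkl.le
  obtain ⟨θ', hθ', hval'⟩ := hsub hmem
  have hθ'2 : θ' ∈ Set.Icc 0 π := ⟨hθ'.1, le_trans hθ'.2 hmeml.2⟩
  have hle : nodeθ a n k ≤ θ' := by
    apply csInf_le ⟨0, fun y hy => hy.1.1⟩
    exact ⟨hθ'2, hval'⟩
  rcases lt_or_eq_of_le (le_trans hle hθ'.2) with h | h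
  · exact h
  · exfalso
    have hvalk := (nodeθ_mem ha (le_trans hkl.le hl)).2
    rw [h, hvall] at hvalk
    have : (k:ℝ) = l := (mul_right_cancel₀ Real.pi_pos.ne' hvalk).symm
    have : k = l := by exact_mod_cast this
    omega

def ck (a : ℝ) (n k : ℕ) : ℝ := tr a^2 + Real.cos (2*(nodeθ a n k))
def dk (a : ℝ) (n k : ℕ) : ℝ := Real.sin (2*(nodeθ a n k))
def rk (a : ℝ) (n k : ℕ) : ℝ := Real.sqrt (ck a n k^2 + dk a n k^2)
def pk (a : ℝ) (n k : ℕ) : ℝ := tr a^2+1+2*tr a*Real.sin (nodeθ a n k)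
def qk (a : ℝ) (n k : ℕ) : ℝ := tr a^2+1-2*tr a*Real.sin (nodeθ a n k)

lemma rk_pos {a : ℝ} (ha : 0 < a) (n k : ℕ) : 0 < rk a n k := by
  have h1 := c_pos ha (2*(nodeθ a n k))
  apply Real.sqrt_pos.mpr
  unfold ck dk
  nlinarith [sq_nonneg (Real.sin (2*(nodeθ a n k)))]

lemma rk_sq {a : ℝ} (ha : 0 < a) (n k : ℕ) : rk a n k^2 = ck a n k^2 + dk a n k^2 := by
  apply Real.sq_sqrt; positivity

lemma pk_pos {a : ℝ} (ha : 0 < a) (n k : ℕ) : 0 < pk a n k := by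
  unfold pk; nlinarith [Real.neg_one_le_sin (nodeθ a n k), one_lt_tr ha]

lemma qk_pos {a : ℝ} (ha : 0 < a) (n k : ℕ) : 0 < qk a n k := by
  unfold qk; nlinarith [Real.sin_le_one (nodeθ a n k), one_lt_tr ha]

lemma rk_sq_eq {a : ℝ} (ha : 0 < a) (n k : ℕ) : rk a n k^2 = pk a n k * qk a n k := by
  rw [rk_sq ha]
  unfold ck dk pk qk
  rw [Real.cos_two_mul, Real.sin_two_mul]
  have h1 := Real.sin_sq_add_cos_sq (nodeθ a n k)
  nlinarith [h1]

lemma node_key {a : ℝ} (ha : 0 < a) {n k : ℕ} (hk : k ≤ n) :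
    ((tr a:ℂ)^2 * (Complex.exp ((nodeθ a n k : ℝ)*I))^2 + 1) * (Complex.exp ((nodeθ a n k : ℝ)*I))^n
      = (-1:ℂ)^k * (rk a n k : ℂ) * (Complex.exp ((nodeθ a n k : ℝ)*I))^2 := by
  set θ := nodeθ a n k with hθ
  have hval := (nodeθ_mem ha hk).2
  set c := ck a n k; set d := dk a n k; set r := rk a n k
  have hc : 0 < c := c_pos ha _
  have hr : 0 < r := rk_pos ha n k
  have hrsq : r^2 = c^2+d^2 := rk_sq ha n k
  -- trig values of psi
  have hψ : psi a θ = Real.arctan (d / c) := rfl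
  have hsqrt : Real.sqrt (1 + (d/c)^2) = r / c := by
    rw [show 1 + (d/c)^2 = (c^2+d^2)/c^2 by field_simp]
    rw [← hrsq, Real.sqrt_div (by positivity), Real.sqrt_sq hc.le,
      Real.sqrt_sq (by positivity : (0:ℝ) ≤ r)]
  have hcosψ : r * Real.cos (psi a θ) = c := by
    rw [hψ, Real.cos_arctan, hsqrt]
    field_simp
  have hsinψ : r * Real.sin (psi a θ) = d := by
    rw [hψ, Real.sin_arctan, hsqrt]
    field_simp
  -- real trig identities
  have hre : r * Real.cos (2*θ - psi a θ) = tr a^2 * Real.cos (2*θ) + 1 := by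
    rw [Real.cos_sub]
    have h1 := Real.sin_sq_add_cos_sq (2*θ)
    have e1 : r * (Real.cos (2*θ) * Real.cos (psi a θ) + Real.sin (2*θ) * Real.sin (psi a θ))
        = Real.cos (2*θ) * c + Real.sin (2*θ) * d := by
      linear_combination Real.cos (2*θ)*hcosψ + Real.sin (2*θ)*hsinψ
    rw [e1]
    show Real.cos (2*θ) * (tr a^2 + Real.cos (2*θ)) + Real.sin (2*θ) * Real.sin (2*θ) = _
    nlinarith [h1]
  have him : r * Real.sin (2*θ - psi a θ) = tr a^2 * Real.sin (2*θ) := by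
    rw [Real.sin_sub]
    have e1 : r * (Real.sin (2*θ) * Real.cos (psi a θ) - Real.cos (2*θ) * Real.sin (psi a θ))
        = Real.sin (2*θ) * c - Real.cos (2*θ) * d := by
      linear_combination Real.sin (2*θ)*hcosψ - Real.cos (2*θ)*hsinψ
    rw [e1]
    show Real.sin (2*θ) * (tr a^2 + Real.cos (2*θ)) - Real.cos (2*θ) * Real.sin (2*θ) = _
    ring
  -- complex step 1
  have key1 : (tr a:ℂ)^2 * Complex.exp ((2*θ:ℝ)*I) + 1 = (r:ℂ) * Complex.exp ((2*θ - psi a θ : ℝ)*I) := by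
    rw [Complex.exp_mul_I, Complex.exp_mul_I]
    rw [show ((2*θ:ℝ):ℂ) = ((2*θ:ℝ):ℂ) from rfl]
    rw [← Complex.ofReal_cos, ← Complex.ofReal_sin, ← Complex.ofReal_cos, ← Complex.ofReal_sin]
    have e1 : ((r:ℝ):ℂ) * (((Real.cos (2*θ-psi a θ) : ℝ):ℂ) + ((Real.sin (2*θ-psi a θ):ℝ):ℂ)*I)
        = ((r * Real.cos (2*θ-psi a θ) : ℝ):ℂ) + ((r * Real.sin (2*θ-psi a θ):ℝ):ℂ)*I := by
      push_cast; ring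
    rw [e1, hre, him]
    push_cast; ring
  -- powers of exp
  have hexp2 : (Complex.exp ((θ:ℝ)*I))^2 = Complex.exp ((2*θ:ℝ)*I) := by
    rw [← Complex.exp_nat_mul]; norm_num; congr 1; ring
  have hexpn : (Complex.exp ((θ:ℝ)*I))^n = Complex.exp ((n*θ:ℝ)*I) := by
    rw [← Complex.exp_nat_mul]; congr 1; push_cast; ring
  have hexpk : Complex.exp ((k*π:ℝ)*I) = (-1:ℂ)^k := by
    rw [show ((k*π:ℝ):ℂ)*I = k*(↑π*I) by push_cast; ring]
    rw [Complex.exp_nat_mul, Complex.exp_pi_mul_I]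
  calc ((tr a:ℂ)^2 * (Complex.exp ((θ:ℝ)*I))^2 + 1) * (Complex.exp ((θ:ℝ)*I))^n
      = ((tr a:ℂ)^2 * Complex.exp ((2*θ:ℝ)*I) + 1) * Complex.exp ((n*θ:ℝ)*I) := by
        rw [hexp2, hexpn]
    _ = (r:ℂ) * (Complex.exp ((2*θ - psi a θ:ℝ)*I) * Complex.exp ((n*θ:ℝ)*I)) := by
        rw [key1]; ring
    _ = (r:ℂ) * Complex.exp ((k*π:ℝ)*I + (2*θ:ℝ)*I) := by
        rw [← Complex.exp_add]
        have h2 : (2*θ - psi a θ) + (n*θ:ℝ) = (k*π:ℝ) + (2*θ:ℝ) := by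
          have h3 : Phi a n θ = k*π := hval
          unfold Phi at h3; linarith
        have harg : ((2*θ - psi a θ:ℝ):ℂ)*I + ((n*θ:ℝ):ℂ)*I = ((k*π:ℝ):ℂ)*I + ((2*θ:ℝ):ℂ)*I := by
          calc ((2*θ - psi a θ:ℝ):ℂ)*I + ((n*θ:ℝ):ℂ)*I
              = (((2*θ - psi a θ) + (n*θ:ℝ) : ℝ):ℂ)*I := by push_cast; ring
            _ = (((k*π:ℝ) + (2*θ:ℝ) : ℝ):ℂ)*I := by rw [h2]
            _ = _ := by push_cast; ring
        rw [harg]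
    _ = (-1:ℂ)^k * (r:ℂ) * (Complex.exp ((θ:ℝ)*I))^2 := by
        rw [Complex.exp_add, hexpk, hexp2]; ring

lemma node_main {a : ℝ} (ha : 0 < a) {m k : ℕ} (hk : k ≤ m+1) :
    ‖(P a (m+1)).eval ((Real.cos (nodeθ a (m+1) k) : ℝ):ℂ)‖ = 1 ∧
    ((P a (m+1)).eval ((Real.cos (nodeθ a (m+1) k) : ℝ):ℂ)) * (-1:ℂ)^k
        * ((2*sr a*rk a (m+1) k*qk a (m+1) k : ℝ):ℂ)
      = Complex.I * ((rk a (m+1) k^2 + qk a (m+1) k^2 : ℝ):ℂ)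
        * ((a:ℂ)*Complex.I - ((Real.cos (nodeθ a (m+1) k):ℝ):ℂ)) := by
  set n := m+1 with hn
  set θ := nodeθ a n k with hθdef
  set co := Real.cos θ with hco
  set si := Real.sin θ with hsi
  set u : ℂ := Complex.exp ((θ:ℝ)*I) with hudef
  have hu_eq : u = (co:ℂ) + (si:ℂ)*I := by
    rw [hudef, Complex.exp_mul_I, ← Complex.ofReal_cos, ← Complex.ofReal_sin]
  set T : ℂ := (tr a : ℂ) with hT
  set S : ℂ := (sr a : ℂ) with hS
  set R : ℂ := (rk a n k : ℂ) with hR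
  set Qc : ℂ := (qk a n k : ℂ) with hQc
  set ε : ℂ := (-1:ℂ)^k with hε
  set e : ℂ := (P a (m+1)).eval ((co:ℝ):ℂ) with he_def
  have hcs : si^2 + co^2 = 1 := Real.sin_sq_add_cos_sq θ
  have hcsC : ((si:ℝ):ℂ)^2 + ((co:ℝ):ℂ)^2 = 1 := by exact_mod_cast congrArg Complex.ofReal hcs
  have hI := Complex.I_sq
  have hT2C : T^2 = 2*(a:ℂ)*T + 1 := by
    rw [hT]; exact_mod_cast congrArg Complex.ofReal (tr_sq ha)
  have hQdef : Qc = T^2+1-2*T*(si:ℂ) := by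
    rw [hQc, hT, show qk a n k = tr a^2+1-2*tr a*si from rfl]; push_cast; ring
  have hε2 : ε^2 = 1 := by rw [hε, ← pow_mul, mul_comm, pow_mul]; norm_num
  have hu_ne : u ≠ 0 := Complex.exp_ne_zero _
  have hzu : 2*((co:ℝ):ℂ)*u = u^2+1 := by
    rw [hu_eq]; linear_combination (-((si:ℂ)^2))*hI + hcsC
  have hcf := cf a ha m ((co:ℝ):ℂ) u hzu
  rw [← he_def, ← hT, ← hS] at hcf
  have hnode : (T^2*u^2+1)*u^n = ε*R*u^2 := node_key ha hk
  have h3' : ((T^2*u^2+1)*u^n)^2 = (ε*R*u^2)^2 := by rw [hnode]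
  have h3 : u^(2*m)*(T^2*u^2+1)^2 = R^2*u^2 := by
    refine mul_right_cancel₀ (pow_ne_zero 2 hu_ne) ?_
    have hnn : u^n = u^(m+1) := by rw [hn]
    rw [hnn] at h3'
    linear_combination h3' + R^2*u^4*hε2
  have hnn : u^n = u^(m+1) := by rw [hn]
  rw [hnn] at hnode
  have he : 4*S*T*(ε*R*u^2)*(T^2*u^2+1)*e
      = -((T*u+I)^2*R^2*u^2 + (T+I*u)^2*(T^2*u^2+1)^2) := by
    linear_combination ((T^2*u^2+1)^2)*hcf + (-(4*S*T*e*(T^2*u^2+1)))*hnode + (-((T*u+I)^2))*h3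
  have h5 : (T^2*u^2+1) = (T*u+I)*(T*u-I) := by linear_combination hI
  have h6 : (T+I*u)*(T*u-I) = u*Qc := by
    rw [hu_eq, hQdef]
    linear_combination (2*T*(co:ℂ)*(si:ℂ) - (co:ℂ) + (T*(si:ℂ)^2 - (si:ℂ))*I)*hI + T*I*hcsC
  have hfact : (T*u+I)^2*R^2*u^2 + (T+I*u)^2*(T^2*u^2+1)^2 = (T*u+I)^2*u^2*(R^2+Qc^2) := by
    rw [h5]
    linear_combination ((T*u+I)^2*((T+I*u)*(T*u-I)+u*Qc))*h6
  have hnormA : Complex.normSq (T*u+I) = pk a n k := by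
    rw [hu_eq, hT]
    rw [show (tr a:ℂ)*((co:ℂ)+(si:ℂ)*I)+I = ((tr a*co:ℝ):ℂ) + ((tr a*si+1:ℝ):ℂ)*I by push_cast; ring]
    rw [Complex.normSq_add_mul_I]
    rw [show pk a n k = tr a^2+1+2*tr a*si from rfl]
    linear_combination (tr a^2)*hcs
  have hnormB : Complex.normSq (T*u-I) = qk a n k := by
    rw [hu_eq, hT]
    rw [show (tr a:ℂ)*((co:ℂ)+(si:ℂ)*I)-I = ((tr a*co:ℝ):ℂ) + ((tr a*si-1:ℝ):ℂ)*I by push_cast; ring]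
    rw [Complex.normSq_add_mul_I]
    rw [show qk a n k = tr a^2+1-2*tr a*si from rfl]
    linear_combination (tr a^2)*hcs
  have hAne : (T*u+I) ≠ 0 := by
    intro h
    rw [h, map_zero] at hnormA
    nlinarith [pk_pos ha n k]
  have hBne : (T*u-I) ≠ 0 := by
    intro h
    rw [h, map_zero] at hnormB
    nlinarith [qk_pos ha n k]
  have hE2 : 4*S*T*ε*R*(T*u-I)*e = -((T*u+I)*(R^2+Qc^2)) := by
    refine mul_left_cancel₀ (mul_ne_zero hAne (pow_ne_zero 2 hu_ne)) ?_
    linear_combination he - hfact - (4*S*T*ε*R*e*u^2)*h5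
  -- part 1 : |e| = 1
  have hnsq := congrArg Complex.normSq hE2
  simp only [map_mul, Complex.normSq_neg] at hnsq
  have c4 : Complex.normSq 4 = 16 := by simp [Complex.normSq_apply]; norm_num
  have cS : Complex.normSq S = sr a^2 := by rw [hS, Complex.normSq_ofReal]; ring
  have cT : Complex.normSq T = tr a^2 := by rw [hT, Complex.normSq_ofReal]; ring
  have cR : Complex.normSq R = rk a n k^2 := by rw [hR, Complex.normSq_ofReal]; ring
  have cε : Complex.normSq ε = 1 := by rw [hε]; simp [map_pow]
  have cRQ : Complex.normSq (R^2+Qc^2) = (rk a n k^2 + qk a n k^2)^2 := by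
    rw [show R^2+Qc^2 = ((rk a n k^2 + qk a n k^2 : ℝ):ℂ) by rw [hR, hQc]; push_cast; ring]
    rw [Complex.normSq_ofReal]; ring
  rw [c4, cS, cT, cR, cε, hnormA, hnormB, cRQ] at hnsq
  -- hnsq : 16*s²*t²*1*r²*q*E = p*(r²+q²)²
  have hE1 : Complex.normSq e = 1 := by
    have hrr := rk_sq_eq ha n k
    have hstr := two_sr_tr ha
    have h1 := rk_pos ha n k
    have h2 := qk_pos ha n k
    have h3 := pk_pos ha n k
    have h4 := sr_pos a
    have h5 := tr_pos ha
    have hKne : (16*sr a^2*tr a^2*rk a n k^2*qk a n k : ℝ) ≠ 0 := by positivity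
    refine mul_right_cancel₀ hKne ?_
    rw [one_mul]
    calc Complex.normSq e * (16*sr a^2*tr a^2*rk a n k^2*qk a n k)
        = pk a n k * (rk a n k^2+qk a n k^2)^2 := by linear_combination hnsq
      _ = 16*sr a^2*tr a^2*rk a n k^2*qk a n k := by
          rw [hrr]
          have h2st : pk a n k + qk a n k = 4*sr a*tr a := by
            unfold pk qk; linarith [hstr]
          linear_combination (pk a n k*qk a n k^2*(pk a n k+qk a n k+4*sr a*tr a))*h2st

  have habs : ‖e‖ = 1 := by
    rw [Complex.norm_def, hE1, Real.sqrt_one]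
  -- part 2 : alignment
  have hTne : T ≠ 0 := by
    rw [hT]; exact_mod_cast (tr_pos ha).ne'
  have hkey : -((T*u+I)*Qc) = 2*T*((T*u-I)*(I*((a:ℂ)*Complex.I - ((co:ℝ):ℂ)))) := by
    rw [hu_eq, hQdef]
    linear_combination (-2*(a:ℂ)*T^2*(co:ℂ) - 2*(a:ℂ)*T*(T*(si:ℂ)-1)*I + 2*T*(T*(si:ℂ)-1)*(co:ℂ))*hI
      + (2*T^2*I)*hcsC + (-T*(co:ℂ) + (1-T*(si:ℂ))*I)*hT2C
  have h2T_ne : (2*T*(T*u-I)) ≠ 0 := by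
    exact mul_ne_zero (mul_ne_zero two_ne_zero hTne) hBne
  have halign : e * ε * ((2*sr a*rk a n k*qk a n k : ℝ):ℂ)
      = Complex.I * ((rk a n k^2 + qk a n k^2 : ℝ):ℂ) * ((a:ℂ)*Complex.I - ((co:ℝ):ℂ)) := by
    refine mul_left_cancel₀ h2T_ne ?_
    push_cast
    linear_combination Qc*hE2 + (R^2+Qc^2)*hkey
  exact ⟨habs, halign⟩

namespace SumPart

/-- the real nodes -/
def xx (a : ℝ) (m j : ℕ) : ℝ := Real.cos (nodeθ a (m+1) j)
/-- the complex nodes -/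
def v (a : ℝ) (m : ℕ) (j : ℕ) : ℂ := ((xx a m j : ℝ) : ℂ)
/-- denominator products -/
def D (a : ℝ) (m k : ℕ) : ℝ := ∏ j ∈ (Finset.range (m+2)).erase k, (xx a m k - xx a m j)
/-- positive coefficients -/
def g (a : ℝ) (m k : ℕ) : ℝ :=
  (rk a (m+1) k^2 + qk a (m+1) k^2) / (2*sr a*rk a (m+1) k*qk a (m+1) k)
    * ((-1:ℝ)^k * D a m k)⁻¹

lemma xx_anti {a : ℝ} (ha : 0 < a) (m : ℕ) {j l : ℕ} (hjl : j < l) (hl : l ≤ m+1) : xx a m l < xx a m j := by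
  have h1 := (nodeθ_mem ha (le_trans hjl.le hl)).1
  have h2 := (nodeθ_mem ha hl).1
  exact Real.strictAntiOn_cos h1 h2 (nodeθ_strict ha hjl hl)

lemma xx_mem_Icc {a : ℝ} (m : ℕ) {j : ℕ} (hj : j ≤ m+1) : xx a m j ∈ Set.Icc (-1:ℝ) 1 :=
  ⟨Real.neg_one_le_cos _, Real.cos_le_one _⟩

lemma v_inj {a : ℝ} (ha : 0 < a) (m : ℕ) : Set.InjOn (v a m) (Finset.range (m+2)) := by
  intro j hj l hl hjl
  simp only [Finset.coe_range, Set.mem_Iio] at hj hl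
  by_contra hne
  have hx : xx a m j ≠ xx a m l := by
    rcases Nat.lt_or_ge j l with h | h
    · exact ne_of_gt (xx_anti ha m h (by omega))
    · exact ne_of_lt (xx_anti ha m (by omega) (by omega))
  exact hx (Complex.ofReal_inj.mp hjl)

lemma D_sign {a : ℝ} (ha : 0 < a) (m : ℕ) {k : ℕ} (hk : k ≤ m+1) : 0 < (-1:ℝ)^k * D a m k := by
  have hsplit : (Finset.range (m+2)).erase k = Finset.range k ∪ Finset.Ico (k+1) (m+2) := by
    ext j
    simp only [Finset.mem_erase, Finset.mem_range, Finset.mem_union, Finset.mem_Ico]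
    omega
  have hdisj : Disjoint (Finset.range k) (Finset.Ico (k+1) (m+2)) := by
    rw [Finset.disjoint_left]
    intro j hj1 hj2
    simp only [Finset.mem_range] at hj1
    simp only [Finset.mem_Ico] at hj2
    omega
  rw [D, hsplit, Finset.prod_union hdisj]
  have h2 : 0 < ∏ j ∈ Finset.Ico (k+1) (m+2), (xx a m k - xx a m j) := by
    apply Finset.prod_pos
    intro j hj
    simp only [Finset.mem_Ico] at hj
    have := xx_anti ha m (show k < j by omega) (by omega)
    linarith
  have h1 : 0 < (-1:ℝ)^k * ∏ j ∈ Finset.range k, (xx a m k - xx a m j) := by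
    have : (-1:ℝ)^k * ∏ j ∈ Finset.range k, (xx a m k - xx a m j)
        = ∏ j ∈ Finset.range k, (xx a m j - xx a m k) := by
      rw [show (-1:ℝ)^k = ∏ _j ∈ Finset.range k, (-1:ℝ) by
        rw [Finset.prod_const, Finset.card_range]]
      rw [← Finset.prod_mul_distrib]
      apply Finset.prod_congr rfl
      intro j _; ring
    rw [this]
    apply Finset.prod_pos
    intro j hj
    simp only [Finset.mem_range] at hj
    have := xx_anti ha m hj hk
    linarith
  calc (0:ℝ) < ((-1:ℝ)^k * ∏ j ∈ Finset.range k, (xx a m k - xx a m j))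
        * ∏ j ∈ Finset.Ico (k+1) (m+2), (xx a m k - xx a m j) := mul_pos h1 h2
    _ = (-1:ℝ)^k * ((∏ j ∈ Finset.range k, (xx a m k - xx a m j))
        * ∏ j ∈ Finset.Ico (k+1) (m+2), (xx a m k - xx a m j)) := by ring

lemma g_pos {a : ℝ} (ha : 0 < a) (m : ℕ) {k : ℕ} (hk : k ≤ m+1) : 0 < g a m k := by
  have h1 := rk_pos ha (m+1) k
  have h2 := qk_pos ha (m+1) k
  have h3 := sr_pos a
  have h4 := D_sign ha m hk
  unfold g
  apply mul_pos (by positivity) (inv_pos.mpr h4)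

lemma eval_basis_eq {a : ℝ} (m : ℕ) {k : ℕ} (hk : k ∈ Finset.range (m+2)) :
    (Lagrange.basis (Finset.range (m+2)) (v a m) k).eval ((a:ℂ)*I)
      = (∏ j ∈ (Finset.range (m+2)).erase k, (((a:ℂ)*I) - v a m j)) * ((D a m k : ℝ):ℂ)⁻¹ := by
  rw [Lagrange.basis, eval_prod]
  have : ∀ j ∈ (Finset.range (m+2)).erase k,
      (Lagrange.basisDivisor (v a m k) (v a m j)).eval ((a:ℂ)*I)
        = (((a:ℂ)*I) - v a m j) * (v a m k - v a m j)⁻¹ := by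
    intro j _
    rw [Lagrange.basisDivisor, eval_mul, eval_C, eval_sub, eval_X, eval_C]
    ring
  rw [Finset.prod_congr rfl this, Finset.prod_mul_distrib]
  congr 1
  have hcast : ((D a m k : ℝ):ℂ) = ∏ j ∈ (Finset.range (m+2)).erase k, (v a m k - v a m j) := by
    rw [D]; push_cast; rfl
  rw [hcast, ← Finset.prod_inv_distrib]

lemma zk_eq {a : ℝ} (ha : 0 < a) (m : ℕ) {k : ℕ} (hk : k ∈ Finset.range (m+2)) :
    ((P a (m+1)).eval (v a m k))
        * (Lagrange.basis (Finset.range (m+2)) (v a m) k).eval ((a:ℂ)*I)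
      = Complex.I * (∏ j ∈ Finset.range (m+2), (((a:ℂ)*I) - v a m j)) * ((g a m k : ℝ):ℂ) := by
  have hkle : k ≤ m+1 := by simp only [Finset.mem_range] at hk; omega
  set e : ℂ := (P a (m+1)).eval (v a m k) with he_def
  set N : ℂ := ∏ j ∈ (Finset.range (m+2)).erase k, (((a:ℂ)*I) - v a m j) with hN
  set W : ℂ := ∏ j ∈ Finset.range (m+2), (((a:ℂ)*I) - v a m j) with hW
  have hWN : (((a:ℂ)*I) - v a m k) * N = W := Finset.mul_prod_erase _ (fun j => ((a:ℂ)*I) - v a m j) hk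
  have halign := (node_main ha hkle).2
  rw [show ((Real.cos (nodeθ a (m+1) k):ℝ):ℂ) = v a m k from rfl] at halign
  have hDpos := D_sign ha m hkle
  have hDne : D a m k ≠ 0 := by
    intro h; rw [h] at hDpos; simp at hDpos
  have hDCne : ((D a m k : ℝ):ℂ) ≠ 0 := by exact_mod_cast hDne
  have hc2pos : (0:ℝ) < 2*sr a*rk a (m+1) k*qk a (m+1) k := by
    have := sr_pos a; have := rk_pos ha (m+1) k; have := qk_pos ha (m+1) k; positivity
  have hc2ne : ((2*sr a*rk a (m+1) k*qk a (m+1) k : ℝ):ℂ) ≠ 0 := by exact_mod_cast hc2pos.ne'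
  have hε2 : ((-1:ℂ)^k)^2 = 1 := by rw [← pow_mul, mul_comm, pow_mul]; norm_num
  have he' : e * ((2*sr a*rk a (m+1) k*qk a (m+1) k : ℝ):ℂ)
      = (-1:ℂ)^k * (Complex.I * ((rk a (m+1) k^2 + qk a (m+1) k^2 : ℝ):ℂ)
          * (((a:ℂ)*I) - v a m k)) := by
    have h := halign
    linear_combination ((-1:ℂ)^k) * h
      - (e * ((2*sr a*rk a (m+1) k*qk a (m+1) k : ℝ):ℂ)) * hε2
  have hgreal : g a m k * (2*sr a*rk a (m+1) k*qk a (m+1) k) * D a m k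
      = (-1:ℝ)^k * (rk a (m+1) k^2 + qk a (m+1) k^2) := by
    have hinv : ((-1:ℝ)^k * D a m k)⁻¹ = (-1:ℝ)^k * (D a m k)⁻¹ := by
      rw [mul_inv]; congr 1; rw [← inv_pow]; norm_num
    unfold g
    rw [hinv]
    have hstep : (rk a (m+1) k^2 + qk a (m+1) k^2)/(2*sr a*rk a (m+1) k*qk a (m+1) k)
        *((-1:ℝ)^k*(D a m k)⁻¹)*(2*sr a*rk a (m+1) k*qk a (m+1) k)*(D a m k)
        = (rk a (m+1) k^2 + qk a (m+1) k^2)*(-1:ℝ)^k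
          *((2*sr a*rk a (m+1) k*qk a (m+1) k)/(2*sr a*rk a (m+1) k*qk a (m+1) k))
          *((D a m k)/(D a m k)) := by ring
    rw [hstep, div_self hc2pos.ne', div_self hDne, mul_one, mul_one]
    ring
  rw [eval_basis_eq m hk]
  refine mul_right_cancel₀ (mul_ne_zero hc2ne hDCne) ?_
  have hεcast : ((-1:ℂ)^k) = (((-1:ℝ)^k : ℝ):ℂ) := by push_cast; ring
  calc e * (N * ((D a m k : ℝ):ℂ)⁻¹)
        * (((2*sr a*rk a (m+1) k*qk a (m+1) k : ℝ):ℂ) * ((D a m k : ℝ):ℂ))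
      = (e * ((2*sr a*rk a (m+1) k*qk a (m+1) k : ℝ):ℂ)) * N
          * (((D a m k : ℝ):ℂ)⁻¹ * ((D a m k : ℝ):ℂ)) := by ring
    _ = (e * ((2*sr a*rk a (m+1) k*qk a (m+1) k : ℝ):ℂ)) * N := by
        rw [inv_mul_cancel₀ hDCne, mul_one]
    _ = (-1:ℂ)^k * (Complex.I * ((rk a (m+1) k^2 + qk a (m+1) k^2 : ℝ):ℂ))
          * ((((a:ℂ)*I) - v a m k) * N) := by rw [he']; ring
    _ = (-1:ℂ)^k * (Complex.I * ((rk a (m+1) k^2 + qk a (m+1) k^2 : ℝ):ℂ)) * W := by rw [hWN]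
    _ = Complex.I * W * ((g a m k : ℝ):ℂ)
          * (((2*sr a*rk a (m+1) k*qk a (m+1) k : ℝ):ℂ) * ((D a m k : ℝ):ℂ)) := by
        have hgC := congrArg (Complex.ofReal) hgreal
        push_cast at hgC
        push_cast
        linear_combination (-(Complex.I*W))*hgC

lemma sum_abs_basis {a : ℝ} (ha : 0 < a) (m : ℕ) :
    ∑ k ∈ Finset.range (m+2), ‖(Lagrange.basis (Finset.range (m+2)) (v a m) k).eval ((a:ℂ)*I)‖
      = sr a * tr a ^ m := by
  set W : ℂ := ∏ j ∈ Finset.range (m+2), (((a:ℂ)*I) - v a m j) with hW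
  have habs1 : ∀ k ∈ Finset.range (m+2),
      ‖(Lagrange.basis (Finset.range (m+2)) (v a m) k).eval ((a:ℂ)*I)‖
        = ‖W‖ * g a m k := by
    intro k hk
    have hkle : k ≤ m+1 := by simp only [Finset.mem_range] at hk; omega
    have h1 := zk_eq ha m hk
    have h2 := (node_main ha hkle).1
    have h3 : ‖(P a (m+1)).eval (v a m k)‖ = 1 := h2
    have := congrArg (‖·‖) h1
    rw [norm_mul, h3, one_mul, norm_mul, norm_mul, Complex.norm_I, one_mul,
      Complex.norm_real, Real.norm_eq_abs, abs_of_pos (g_pos ha m hkle)] at this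
    exact this
  rw [Finset.sum_congr rfl habs1, ← Finset.mul_sum]
  have hsum_z : ∑ k ∈ Finset.range (m+2),
      ((P a (m+1)).eval (v a m k))
        * (Lagrange.basis (Finset.range (m+2)) (v a m) k).eval ((a:ℂ)*I)
      = (P a (m+1)).eval ((a:ℂ)*I) := by
    have hdeg : (P a (m+1)).degree < (Finset.range (m+2)).card := by
      rw [Finset.card_range]
      exact lt_of_le_of_lt (P_degree a m) (by exact_mod_cast Nat.lt_succ_self (m+1))
    have hint := Lagrange.eq_interpolate (v_inj ha m) hdeg
    conv_rhs => rw [hint]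
    rw [Lagrange.interpolate_apply, eval_finset_sum]
    apply Finset.sum_congr rfl
    intro k _
    rw [eval_mul, eval_C]
  have hsum_z2 : ∑ k ∈ Finset.range (m+2),
      ((P a (m+1)).eval (v a m k))
        * (Lagrange.basis (Finset.range (m+2)) (v a m) k).eval ((a:ℂ)*I)
      = Complex.I * W * ((∑ k ∈ Finset.range (m+2), g a m k : ℝ):ℂ) := by
    rw [Finset.sum_congr rfl (fun k hk => zk_eq ha m hk)]
    rw [← Finset.mul_sum]
    congr 1
    push_cast
    rfl
  have hgsum_nonneg : 0 ≤ ∑ k ∈ Finset.range (m+2), g a m k := by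
    apply Finset.sum_nonneg
    intro k hk
    exact (g_pos ha m (by simp only [Finset.mem_range] at hk; omega)).le
  have : ‖W‖ * (∑ k ∈ Finset.range (m+2), g a m k)
      = ‖(P a (m+1)).eval ((a:ℂ)*I)‖ := by
    rw [← hsum_z, hsum_z2, norm_mul, norm_mul, Complex.norm_I, one_mul,
      Complex.norm_real, Real.norm_eq_abs, _root_.abs_of_nonneg hgsum_nonneg]
  rw [this, P_eval_ia a ha m]

lemma upper_bound {a : ℝ} (ha : 0 < a) (m : ℕ) (p : Polynomial ℂ)
    (hdeg : p.degree ≤ ((m+1 : ℕ) : WithBot ℕ))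
    (hbd : ∀ x : ℝ, x ∈ Set.Icc (-1:ℝ) 1 → ‖p.eval (x : ℂ)‖ ≤ 1) :
    ‖p.eval ((a:ℂ)*I)‖ ≤ sr a * tr a ^ m := by
  have hdeg' : p.degree < (Finset.range (m+2)).card := by
    rw [Finset.card_range]
    exact lt_of_le_of_lt hdeg (by exact_mod_cast Nat.lt_succ_self (m+1))
  have hint := Lagrange.eq_interpolate (v_inj ha m) hdeg'
  have heval : p.eval ((a:ℂ)*I) = ∑ k ∈ Finset.range (m+2),
      (p.eval (v a m k)) * (Lagrange.basis (Finset.range (m+2)) (v a m) k).eval ((a:ℂ)*I) := by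
    conv_lhs => rw [hint]
    rw [Lagrange.interpolate_apply, eval_finset_sum]
    apply Finset.sum_congr rfl
    intro k _
    rw [eval_mul, eval_C]
  rw [heval]
  calc ‖∑ k ∈ Finset.range (m+2),
        (p.eval (v a m k)) * (Lagrange.basis (Finset.range (m+2)) (v a m) k).eval ((a:ℂ)*I)‖
      ≤ ∑ k ∈ Finset.range (m+2), ‖(p.eval (v a m k)) * (Lagrange.basis (Finset.range (m+2)) (v a m) k).eval ((a:ℂ)*I)‖ :=
        norm_sum_le _ _
    _ ≤ ∑ k ∈ Finset.range (m+2), ‖(Lagrange.basis (Finset.range (m+2)) (v a m) k).eval ((a:ℂ)*I)‖ := by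
        apply Finset.sum_le_sum
        intro k hk
        rw [norm_mul]
        have hb : ‖p.eval (v a m k)‖ ≤ 1 :=
          hbd (xx a m k) (xx_mem_Icc m (by simp only [Finset.mem_range] at hk; omega))
        nlinarith [norm_nonneg ((Lagrange.basis (Finset.range (m+2)) (v a m) k).eval ((a:ℂ)*I)),
          norm_nonneg (p.eval (v a m k))]
    _ = sr a * tr a ^ m := sum_abs_basis ha m

end SumPart


end

end Stmt18Aux

open Stmt18Aux Stmt18Aux.SumPart in
/-- The extremal growth at `ai` over complex polynomials of degree at most `n` bounded by
`1` on `[-1,1]` is `√(a²+1)(a+√(a²+1))^{n-1}`, attained by the polynomial `Q_n`. -/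
theorem stmt18 (a : ℝ) (ha : 0 < a) (n : ℕ) (hn : 1 ≤ n) (Q : ℕ → ℂ → ℂ)
    (hQ1 : ∀ z : ℂ, Q 1 z = -((a : ℂ) * z + Complex.I) / (Real.sqrt (a ^ 2 + 1) : ℂ))
    (hQ2 : ∀ z : ℂ, Q 2 z =
      (-(((a : ℂ) + (Real.sqrt (a ^ 2 + 1) : ℂ))) * z ^ 2 - Complex.I * z +
        (Real.sqrt (a ^ 2 + 1) : ℂ)) / (Real.sqrt (a ^ 2 + 1) : ℂ))
    (hrec : ∀ m : ℕ, 2 ≤ m → ∀ z : ℂ, Q (m + 1) z = 2 * z * Q m z - Q (m - 1) z) :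
    IsGreatest {y : ℝ | ∃ p : Polynomial ℂ, p.degree ≤ n ∧
        (∀ x : ℝ, x ∈ Set.Icc (-1 : ℝ) 1 → ‖p.eval (x : ℂ)‖ ≤ 1) ∧
        y = ‖p.eval ((a : ℂ) * Complex.I)‖}
      (Real.sqrt (a ^ 2 + 1) * (a + Real.sqrt (a ^ 2 + 1)) ^ (n - 1)) ∧
    (∃ p : Polynomial ℂ, p.degree ≤ n ∧ (∀ z : ℂ, p.eval z = Q n z) ∧
      (∀ x : ℝ, x ∈ Set.Icc (-1 : ℝ) 1 → ‖p.eval (x : ℂ)‖ ≤ 1) ∧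
      ‖p.eval ((a : ℂ) * Complex.I)‖ =
        Real.sqrt (a ^ 2 + 1) * (a + Real.sqrt (a ^ 2 + 1)) ^ (n - 1)) := by
  obtain ⟨m, rfl⟩ : ∃ m, n = m + 1 := ⟨n - 1, by omega⟩
  have hval : Real.sqrt (a ^ 2 + 1) * (a + Real.sqrt (a ^ 2 + 1)) ^ (m + 1 - 1)
      = sr a * tr a ^ m := by
    norm_num [sr, tr]
  rw [hval]
  constructor
  · constructor
    · exact ⟨P a (m+1), P_degree a m, P_bound a ha m, (P_eval_ia a ha m).symm⟩
    · rintro y ⟨p, hdeg, hbd, rfl⟩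
      exact upper_bound ha m p hdeg hbd
  · exact ⟨P a (m+1), P_degree a m, fun z => P_eval_eq_Q a Q hQ1 hQ2 hrec m z,
      P_bound a ha m, P_eval_ia a ha m⟩
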